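/- Let n ≥ 1, h = 1/n, and I_j = [(j−1)h, jh) for j = 1, …, n. For an integrable f : [0,1) → ℝ of bounded variation, let P_h f be the piecewise constant function whose value on each I_j is the average (1/h)∫_{I_j} f dm (the Ulam projection). Then ∫_0^1 |P_h f − f| dm ≤ (h/2) · Var(f). -/

import Mathlib

open Set MeasureTheory

private lemma ulam_intOn {a b : ℝ} {g : ℝ → ℝ} (hm : AEStronglyMeasurable g volume)
    {C : ℝ} (hC : ∀ x ∈ Ico a b, |g x| ≤ C) : IntegrableOn g (Ico a b) :=
  Measure.integrableOn_of_bounded (by simp [Real.volume_Ico]) hm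
    ((ae_restrict_iff' measurableSet_Ico).2 (Filter.Eventually.of_forall fun x hx => by
      simpa [Real.norm_eq_abs] using hC x hx))

private lemma ulam_core0 {v : ℝ → ℝ} (hv : Monotone v) {a b D : ℝ} (hab : a < b)
    (h0 : ∀ x ∈ Ico a b, 0 ≤ v x) (hD : ∀ x ∈ Ico a b, v x ≤ D) :
    ∫ x in Ico a b, ∫ t in Ico a b, |v t - v x| ≤ D * (b - a) ^ 2 / 2 := by
  have hS : MeasurableSet (Ico a b) := measurableSet_Ico
  have hvm : Measurable v := hv.measurable
  have hD0 : 0 ≤ D := le_trans (h0 a ⟨le_rfl, hab⟩) (hD a ⟨le_rfl, hab⟩)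
  have hvabs : ∀ x ∈ Ico a b, |v x| ≤ D := fun x hx => abs_le.2 ⟨by linarith [h0 x hx], hD x hx⟩
  have Ic : ∀ c : ℝ, IntegrableOn (fun _ : ℝ => c) (Ico a b) volume := fun c =>
    integrableOn_const (by simp [Real.volume_Ico])
  have Iv : IntegrableOn v (Ico a b) := ulam_intOn hvm.aestronglyMeasurable hvabs
  have hpt : ∀ x t : ℝ, |v t - v x| = v t + v x - 2 * v (min t x) := by
    intro x t
    rcases le_total t x with h | h
    · rw [min_eq_left h, abs_sub_comm, abs_of_nonneg (sub_nonneg.2 (hv h))]; ring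
    · rw [min_eq_right h, abs_of_nonneg (sub_nonneg.2 (hv h))]; ring
  have hmin : ∀ x t : ℝ, v (min t x) = (Iic x).indicator v t + (Ioi x).indicator (fun _ => v x) t := by
    intro x t
    rcases le_or_gt t x with h | h
    · simp [indicator_apply, min_eq_left h, h, not_lt.2 h]
    · simp [indicator_apply, min_eq_right h.le, not_le.2 h, h]
  set C := ∫ t in Ico a b, v t with hCdef
  set Gg : ℝ → ℝ := fun x => ∫ t in Ico a b, (Iic x).indicator v t with hGgdef
  have IvInd : ∀ x : ℝ, IntegrableOn ((Iic x).indicator v) (Ico a b) :=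
    fun x => Iv.indicator measurableSet_Iic
  have inner_eq : ∀ x ∈ Ico a b,
      (∫ t in Ico a b, |v t - v x|) = C + (b - a) * v x - 2 * (Gg x + (b - x) * v x) := by
    intro x hx
    have hIoi : Ioi x ∩ Ico a b = Ioo x b := by
      ext y
      simp only [mem_inter_iff, mem_Ioi, mem_Ico, mem_Ioo]
      exact ⟨fun ⟨h1, _, h3⟩ => ⟨h1, h3⟩, fun ⟨h1, h2⟩ => ⟨h1, hx.1.trans h1.le, h2⟩⟩
    have e1 : (∫ t in Ico a b, (Ioi x).indicator (fun _ => v x) t) = (b - x) * v x := by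
      rw [integral_indicator measurableSet_Ioi, Measure.restrict_restrict measurableSet_Ioi,
        hIoi, setIntegral_const, measureReal_def, Real.volume_Ioo, ENNReal.toReal_ofReal (by linarith [hx.2]),
        smul_eq_mul]
    have Imin : IntegrableOn (fun t => v (min t x)) (Ico a b) := by
      apply ulam_intOn (hvm.comp (measurable_id.min measurable_const)).aestronglyMeasurable
      intro t ht
      exact hvabs _ ⟨le_min ht.1 hx.1, lt_of_le_of_lt (min_le_left _ _) ht.2⟩
    calc (∫ t in Ico a b, |v t - v x|)
        = ∫ t in Ico a b, (v t + v x - 2 * v (min t x)) := by simp only [hpt]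
      _ = (∫ t in Ico a b, (v t + v x)) - ∫ t in Ico a b, 2 * v (min t x) :=
          integral_sub (Iv.add (Ic (v x))) (Imin.const_mul 2)
      _ = (C + (b - a) * v x) - 2 * (Gg x + (b - x) * v x) := by
          rw [integral_add Iv (Ic (v x)), integral_const_mul 2 _]
          congr 1
          · congr 1
            rw [setIntegral_const, measureReal_def, Real.volume_Ico, ENNReal.toReal_ofReal (by linarith [hab.le]),
              smul_eq_mul]
          · congr 1
            calc (∫ t in Ico a b, v (min t x))
                = ∫ t in Ico a b,
                    ((Iic x).indicator v t + (Ioi x).indicator (fun _ => v x) t) := by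
                  simp only [hmin]
              _ = Gg x + (b - x) * v x := by
                  rw [integral_add (IvInd x) ((Ic (v x)).indicator measurableSet_Ioi), e1]
  have GgMono : Monotone Gg := by
    intro x y hxy
    apply setIntegral_mono_on (IvInd x) (IvInd y) hS
    intro t ht
    by_cases h : t ≤ x
    · simp [indicator_apply, h, h.trans hxy]
    · simp only [indicator_apply, mem_Iic, h, if_false]
      by_cases h' : t ≤ y
      · simpa [h'] using h0 t ht
      · simp [h']
  have GgBdd : ∀ x ∈ Ico a b, |Gg x| ≤ (b - a) * D := by
    intro x _
    have hub : Gg x ≤ (b - a) * D := by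
      calc Gg x ≤ ∫ _ in Ico a b, D := by
            apply setIntegral_mono_on (IvInd x) (Ic D) hS
            intro t ht
            by_cases h : t ≤ x
            · simpa [indicator_apply, h] using hD t ht
            · simp [indicator_apply, h, hD0]
        _ = (b - a) * D := by
            rw [setIntegral_const, measureReal_def, Real.volume_Ico, ENNReal.toReal_ofReal (by linarith [hab.le]),
              smul_eq_mul]
    have hlb : 0 ≤ Gg x := by
      apply setIntegral_nonneg hS
      intro t ht
      by_cases h : t ≤ x
      · simpa [indicator_apply, h] using h0 t ht
      · simp [indicator_apply, h]
    rw [abs_of_nonneg hlb]; exact hub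
  have IGg : IntegrableOn Gg (Ico a b) :=
    ulam_intOn GgMono.measurable.aestronglyMeasurable GgBdd
  have prodInt : Integrable (fun p : ℝ × ℝ => (Iic p.1).indicator v p.2)
      ((volume.restrict (Ico a b)).prod (volume.restrict (Ico a b))) := by
    rw [Measure.prod_restrict]
    have heq : (fun p : ℝ × ℝ => (Iic p.1).indicator v p.2)
        = fun p : ℝ × ℝ => if p.2 ≤ p.1 then v p.2 else 0 := by
      funext p; simp [indicator_apply]
    apply Measure.integrableOn_of_bounded (M := D)
    · rw [Measure.prod_prod, Real.volume_Ico]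
      exact ENNReal.mul_ne_top ENNReal.ofReal_ne_top ENNReal.ofReal_ne_top
    · rw [heq]
      exact (Measurable.ite (measurableSet_le measurable_snd measurable_fst)
        (hvm.comp measurable_snd) measurable_const).aestronglyMeasurable
    · rw [ae_restrict_iff' (hS.prod hS)]
      refine Filter.Eventually.of_forall fun p hp => ?_
      by_cases h : p.2 ≤ p.1
      · simpa [indicator_apply, h, Real.norm_eq_abs] using hvabs _ hp.2
      · simp [indicator_apply, h, Real.norm_eq_abs, hD0]
  have fubini : (∫ x in Ico a b, Gg x) = ∫ t in Ico a b, (b - t) * v t := by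
    have swap := integral_integral_swap (f := fun x t => (Iic x).indicator v t) prodInt
    rw [hGgdef]
    rw [swap]
    refine setIntegral_congr_fun hS fun t ht => ?_
    show (∫ x in Ico a b, (Iic x).indicator v t) = (b - t) * v t
    have hflip : (fun x => (Iic x).indicator v t) = fun x => (Ici t).indicator (fun _ => v t) x := by
      funext x; by_cases h : t ≤ x <;> simp [indicator_apply, h]
    have hIci : Ici t ∩ Ico a b = Ico t b := by
      ext y; simp only [mem_inter_iff, mem_Ici, mem_Ico]
      exact ⟨fun ⟨h1, _, h3⟩ => ⟨h1, h3⟩, fun ⟨h1, h2⟩ => ⟨h1, ht.1.trans h1, h2⟩⟩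
    rw [hflip, integral_indicator measurableSet_Ici, Measure.restrict_restrict measurableSet_Ici,
      hIci, setIntegral_const, measureReal_def, Real.volume_Ico, ENNReal.toReal_ofReal (by linarith [ht.2]),
      smul_eq_mul]
  have Ivb : IntegrableOn (fun x => (b - x) * v x) (Ico a b) := by
    have hm1 : Measurable fun x : ℝ => (b - x) * v x :=
      (measurable_const.sub measurable_id).mul hvm
    apply ulam_intOn hm1.aestronglyMeasurable (C := (b - a) * D)
    intro x hx
    rw [abs_mul]
    apply mul_le_mul ?_ (hvabs x hx) (abs_nonneg _) (by linarith [hab.le])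
    rw [abs_of_nonneg (by linarith [hx.2])]
    linarith [hx.1]
  have outer : (∫ x in Ico a b, ∫ t in Ico a b, |v t - v x|)
      = ∫ x in Ico a b, (C + (b - a) * v x - 2 * (Gg x + (b - x) * v x)) :=
    setIntegral_congr_fun hS inner_eq
  set T := ∫ t in Ico a b, (b - t) * v t with hTdef
  have expand : (∫ x in Ico a b, (C + (b - a) * v x - 2 * (Gg x + (b - x) * v x)))
      = ((b - a) * C + (b - a) * C) - 2 * (T + T) := by
    have e2 : (∫ x in Ico a b, (C + (b - a) * v x - 2 * (Gg x + (b - x) * v x)))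
        = (∫ x in Ico a b, (C + (b - a) * v x)) - ∫ x in Ico a b, 2 * (Gg x + (b - x) * v x) :=
      integral_sub ((Ic C).add (Iv.const_mul _)) ((IGg.add Ivb).const_mul 2)
    have e3 : (∫ x in Ico a b, (C + (b - a) * v x)) = (b - a) * C + (b - a) * C := by
      rw [integral_add (Ic C) (Iv.const_mul _), integral_const_mul, setIntegral_const, measureReal_def,
        Real.volume_Ico, ENNReal.toReal_ofReal (by linarith [hab.le]), smul_eq_mul]
    have e4 : (∫ x in Ico a b, 2 * (Gg x + (b - x) * v x)) = 2 * (T + T) := by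
      have := integral_add IGg Ivb
      rw [integral_const_mul, integral_add IGg Ivb, fubini]
    rw [e2, e3, e4]
  have single : ((b - a) * C + (b - a) * C) - 2 * (T + T)
      = ∫ t in Ico a b, 2 * ((2 * t - a - b) * v t) := by
    have h1 : IntegrableOn (fun t => (2 * (b - a)) * v t) (Ico a b) := Iv.const_mul _
    have h2 : IntegrableOn (fun t => 4 * ((b - t) * v t)) (Ico a b) := Ivb.const_mul 4
    calc ((b - a) * C + (b - a) * C) - 2 * (T + T)
        = (2 * (b - a)) * C - 4 * T := by ring
      _ = (∫ t in Ico a b, (2 * (b - a)) * v t) - ∫ t in Ico a b, 4 * ((b - t) * v t) := by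
          rw [integral_const_mul, integral_const_mul]
      _ = ∫ t in Ico a b, ((2 * (b - a)) * v t - 4 * ((b - t) * v t)) := (integral_sub h1 h2).symm
      _ = ∫ t in Ico a b, 2 * ((2 * t - a - b) * v t) :=
          setIntegral_congr_fun hS fun t _ => by ring
  have M3 : ∀ t ∈ Ico a b, |2 * t - a - b| ≤ 3 * (|a| + |b|) := by
    intro t ht
    have ha1 := le_abs_self a; have hb1 := le_abs_self b
    have ha2 := neg_abs_le a; have hb2 := neg_abs_le b
    have h2 := ht.1; have h3 := ht.2
    rw [abs_le]; constructor <;> linarith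
  have Ilhs : IntegrableOn (fun t => 2 * ((2 * t - a - b) * v t)) (Ico a b) := by
    have hm2 : Measurable fun t : ℝ => 2 * ((2 * t - a - b) * v t) :=
      ((((measurable_id.const_mul 2).sub measurable_const).sub measurable_const).mul hvm).const_mul 2
    apply ulam_intOn hm2.aestronglyMeasurable (C := 2 * (3 * (|a| + |b|) * D))
    intro t ht
    calc |2 * ((2 * t - a - b) * v t)| = 2 * (|2 * t - a - b| * |v t|) := by
          rw [abs_mul, abs_mul, abs_two]
      _ ≤ 2 * (3 * (|a| + |b|) * D) := by
          have := mul_le_mul (M3 t ht) (hvabs t ht) (abs_nonneg _) (by positivity)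
          linarith
  have Irhs : IntegrableOn (fun t => 2 * D * max 0 (2 * t - a - b)) (Ico a b) := by
    have hcont : Continuous fun t : ℝ => 2 * D * max 0 (2 * t - a - b) := by
      exact continuous_const.mul (continuous_const.max
        (((continuous_const.mul continuous_id).sub continuous_const).sub continuous_const))
    exact hcont.integrableOn_Icc.mono_set Ico_subset_Icc_self
  have mono : (∫ t in Ico a b, 2 * ((2 * t - a - b) * v t))
      ≤ ∫ t in Ico a b, 2 * D * max 0 (2 * t - a - b) := by
    apply setIntegral_mono_on Ilhs Irhs hS
    intro t ht
    rcases le_or_gt (2 * t - a - b) 0 with hs | hs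
    · rw [max_eq_left hs, mul_zero]
      nlinarith [h0 t ht]
    · rw [max_eq_right hs.le]
      nlinarith [hD t ht, h0 t ht]
  have maxval : (∫ t in Ico a b, max 0 (2 * t - a - b)) = (b - a) ^ 2 / 4 := by
    have hma : a ≤ (a + b) / 2 := by linarith
    have hmb : (a + b) / 2 ≤ b := by linarith
    have hsplit : Ico a b = Ico a ((a + b) / 2) ∪ Ico ((a + b) / 2) b :=
      (Ico_union_Ico_eq_Ico hma hmb).symm
    have hcont : Continuous fun t : ℝ => max 0 (2 * t - a - b) :=
      continuous_const.max
        (((continuous_const.mul continuous_id).sub continuous_const).sub continuous_const)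
    rw [hsplit, setIntegral_union (Ico_disjoint_Ico_same) measurableSet_Ico
      (hcont.integrableOn_Icc.mono_set Ico_subset_Icc_self)
      (hcont.integrableOn_Icc.mono_set Ico_subset_Icc_self)]
    have e1 : (∫ t in Ico a ((a + b) / 2), max 0 (2 * t - a - b)) = 0 := by
      rw [setIntegral_congr_fun measurableSet_Ico (g := fun _ => (0 : ℝ))
        (fun t ht => max_eq_left (by linarith [ht.2]))]
      simp
    have e2 : (∫ t in Ico ((a + b) / 2) b, max 0 (2 * t - a - b)) = (b - a) ^ 2 / 4 := by
      rw [setIntegral_congr_fun measurableSet_Ico (g := fun t => 2 * t - (a + b))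
        (fun t ht => by rw [max_eq_right (by linarith [ht.1])]; ring)]
      rw [integral_Ico_eq_integral_Ioo, ← integral_Ioc_eq_integral_Ioo, ← intervalIntegral.integral_of_le hmb]
      have h1 : IntervalIntegrable (fun t : ℝ => 2 * t) volume ((a + b) / 2) b :=
        (continuous_const.mul continuous_id).intervalIntegrable _ _
      have h2 : IntervalIntegrable (fun _ : ℝ => a + b) volume ((a + b) / 2) b :=
        intervalIntegrable_const
      rw [intervalIntegral.integral_sub h1 h2, intervalIntegral.integral_const,
        intervalIntegral.integral_const_mul, integral_id, smul_eq_mul]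
      ring
    rw [e1, e2, zero_add]
  rw [outer, expand, single]
  calc (∫ t in Ico a b, 2 * ((2 * t - a - b) * v t))
      ≤ ∫ t in Ico a b, 2 * D * max 0 (2 * t - a - b) := mono
    _ = 2 * D * ((b - a) ^ 2 / 4) := by rw [integral_const_mul, maxval]
    _ = D * (b - a) ^ 2 / 2 := by ring


private lemma ulam_core {v : ℝ → ℝ} (hv : Monotone v) {a b L G : ℝ} (hab : a < b)
    (hL : ∀ x ∈ Ico a b, L ≤ v x) (hG : ∀ x ∈ Ico a b, v x ≤ G) :
    ∫ x in Ico a b, ∫ t in Ico a b, |v t - v x| ≤ (G - L) * (b - a) ^ 2 / 2 := by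
  have hmono : Monotone fun t => v t - L := fun x y hxy => sub_le_sub_right (hv hxy) L
  have h := ulam_core0 (D := G - L) hmono hab
    (fun x hx => by simp only [sub_nonneg]; exact hL x hx)
    (fun x hx => sub_le_sub_right (hG x hx) L)
  simpa only [sub_sub_sub_cancel_right] using h

private lemma ulam_interval {f v : ℝ → ℝ} {a b L G : ℝ} (hab : a < b)
    (hv : Monotone v)
    (hfi : IntegrableOn f (Ico a b))
    (hL : ∀ x ∈ Ico a b, L ≤ v x) (hG : ∀ x ∈ Ico a b, v x ≤ G)
    (hfv : ∀ x ∈ Ico a b, ∀ t ∈ Ico a b, |f t - f x| ≤ |v t - v x|)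
    {P : ℝ → ℝ} (hPx : ∀ x ∈ Ico a b, P x = (b - a)⁻¹ * ∫ t in Ico a b, f t) :
    ∫ x in Ico a b, |P x - f x| ≤ (b - a) / 2 * (G - L) := by
  have hS : MeasurableSet (Ico a b) := measurableSet_Ico
  have hvm : Measurable v := hv.measurable
  have hba : (0:ℝ) < b - a := by linarith
  have hD0 : 0 ≤ G - L := by linarith [hL a ⟨le_rfl, hab⟩, hG a ⟨le_rfl, hab⟩]
  have hvabs : ∀ x ∈ Ico a b, |v x| ≤ |L| + |G| := by
    intro x hx
    have := hL x hx; have := hG x hx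
    have := le_abs_self G; have := neg_abs_le L
    have := abs_nonneg G; have := abs_nonneg L
    rw [abs_le]; constructor <;> linarith
  have Ic : ∀ c : ℝ, IntegrableOn (fun _ : ℝ => c) (Ico a b) volume := fun c =>
    integrableOn_const (by simp [Real.volume_Ico])
  have Iv : IntegrableOn v (Ico a b) := ulam_intOn hvm.aestronglyMeasurable hvabs
  -- pointwise bound
  have hstep1 : ∀ x ∈ Ico a b, |P x - f x| ≤ (b - a)⁻¹ * ∫ t in Ico a b, |v t - v x| := by
    intro x hx
    have hIfx : IntegrableOn (fun t => f t - f x) (Ico a b) := hfi.sub (Ic (f x))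
    have hIabs : IntegrableOn (fun t => |f t - f x|) (Ico a b) := hIfx.abs
    have hIvabs : IntegrableOn (fun t => |v t - v x|) (Ico a b) := by
      apply ulam_intOn ((hvm.sub measurable_const).abs).aestronglyMeasurable
        (C := (|L| + |G|) + |v x|)
      intro t ht
      rw [abs_abs]
      calc |v t - v x| ≤ |v t| + |v x| := abs_sub _ _
        _ ≤ (|L| + |G|) + |v x| := by linarith [hvabs t ht]
  -- identity for P x - f x
    have heval : P x - f x = (b - a)⁻¹ * ∫ t in Ico a b, (f t - f x) := by
      rw [integral_sub hfi (Ic (f x)), setIntegral_const, measureReal_def, Real.volume_Ico,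
        ENNReal.toReal_ofReal hba.le, smul_eq_mul, hPx x hx]
      field_simp
    calc |P x - f x| = (b - a)⁻¹ * |∫ t in Ico a b, (f t - f x)| := by
          rw [heval, abs_mul, abs_of_nonneg (by positivity : (0:ℝ) ≤ (b - a)⁻¹)]
      _ ≤ (b - a)⁻¹ * ∫ t in Ico a b, |f t - f x| := by
          apply mul_le_mul_of_nonneg_left ?_ (by positivity)
          simpa [Real.norm_eq_abs] using
            norm_integral_le_integral_norm (μ := volume.restrict (Ico a b)) (fun t => f t - f x)
      _ ≤ (b - a)⁻¹ * ∫ t in Ico a b, |v t - v x| := by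
          apply mul_le_mul_of_nonneg_left ?_ (by positivity)
          exact setIntegral_mono_on hIabs hIvabs hS (fun t ht => hfv x hx t ht)
  -- integrability of both sides
  have hPeq : EqOn (fun x => |((b - a)⁻¹ * ∫ t in Ico a b, f t) - f x|)
      (fun x => |P x - f x|) (Ico a b) := fun x hx => by
    show |((b - a)⁻¹ * ∫ t in Ico a b, f t) - f x| = |P x - f x|
    rw [hPx x hx]
  have hIP : IntegrableOn (fun x => |P x - f x|) (Ico a b) :=
    IntegrableOn.congr_fun (((Ic _).sub hfi).abs) hPeq hS
  have prodInt : Integrable (fun p : ℝ × ℝ => |v p.2 - v p.1|)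
      ((volume.restrict (Ico a b)).prod (volume.restrict (Ico a b))) := by
    rw [Measure.prod_restrict]
    apply Measure.integrableOn_of_bounded (M := 2 * (|L| + |G|))
    · rw [Measure.prod_prod, Real.volume_Ico]
      exact ENNReal.mul_ne_top ENNReal.ofReal_ne_top ENNReal.ofReal_ne_top
    · exact ((hvm.comp measurable_snd).sub (hvm.comp measurable_fst)).abs.aestronglyMeasurable
    · rw [ae_restrict_iff' (hS.prod hS)]
      refine Filter.Eventually.of_forall fun p hp => ?_
      rw [Real.norm_eq_abs, abs_abs]
      calc |v p.2 - v p.1| ≤ |v p.2| + |v p.1| := abs_sub _ _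
        _ ≤ 2 * (|L| + |G|) := by linarith [hvabs _ hp.1, hvabs _ hp.2]
  have hIinner : IntegrableOn (fun x => (b - a)⁻¹ * ∫ t in Ico a b, |v t - v x|) (Ico a b) := by
    have := (prodInt.integral_prod_left).const_mul (b - a)⁻¹
    exact this
  calc (∫ x in Ico a b, |P x - f x|)
      ≤ ∫ x in Ico a b, (b - a)⁻¹ * ∫ t in Ico a b, |v t - v x| :=
        setIntegral_mono_on hIP hIinner hS hstep1
    _ = (b - a)⁻¹ * ∫ x in Ico a b, ∫ t in Ico a b, |v t - v x| := integral_const_mul _ _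
    _ ≤ (b - a)⁻¹ * ((G - L) * (b - a) ^ 2 / 2) := by
        apply mul_le_mul_of_nonneg_left (ulam_core hv hab hL hG) (by positivity)
    _ = (b - a) / 2 * (G - L) := by field_simp

/-- Ulam projection error: if `P` is the piecewise constant function whose value on
each interval `I_j = [(j-1)h, jh)` (`h = 1/n`) is the average of `f` on `I_j`, then
`∫_0^1 |P f - f| ≤ (h/2) Var(f)`. -/
theorem ulam_projection_error
    (n : ℕ) (hn : 1 ≤ n) (h : ℝ) (hh : h = 1 / n)
    (f : ℝ → ℝ)
    (hfBV : BoundedVariationOn f (Ico 0 1))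
    (hfInt : IntegrableOn f (Ico 0 1))
    (P : ℝ → ℝ)
    (hP : ∀ j, j < n → ∀ x ∈ Ico ((j : ℝ) * h) (((j : ℝ) + 1) * h),
      P x = (1 / h) * ∫ t in Ico ((j : ℝ) * h) (((j : ℝ) + 1) * h), f t) :
    ∫ x in Ico (0 : ℝ) 1, |P x - f x| ≤ h / 2 * (eVariationOn f (Ico 0 1)).toReal := by
  have hn0 : (0:ℝ) < n := by exact_mod_cast hn
  have hh0 : 0 < h := by rw [hh]; positivity
  have hnh : (n:ℝ) * h = 1 := by rw [hh]; field_simp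
  set V : ℝ → ℝ := fun x => (eVariationOn f (Ico (0:ℝ) 1 ∩ Icc 0 x)).toReal with hVdef
  set Vtot : ℝ := (eVariationOn f (Ico (0:ℝ) 1)).toReal with hVtotdef
  have hfin : ∀ x : ℝ, eVariationOn f (Ico (0:ℝ) 1 ∩ Icc 0 x) ≠ ⊤ :=
    fun x => ne_top_of_le_ne_top hfBV (eVariationOn.mono f inter_subset_left)
  have hVmono : Monotone V := by
    intro x y hxy
    exact ENNReal.toReal_mono (hfin y)
      (eVariationOn.mono f (inter_subset_inter_right _ (Icc_subset_Icc le_rfl hxy)))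
  have hVle : ∀ x, V x ≤ Vtot := fun x =>
    ENNReal.toReal_mono hfBV (eVariationOn.mono f inter_subset_left)
  have hV0 : ∀ x, 0 ≤ V x := fun _ => ENNReal.toReal_nonneg
  have key : ∀ x ∈ Ico (0:ℝ) 1, ∀ t ∈ Ico (0:ℝ) 1, x ≤ t → |f t - f x| ≤ V t - V x := by
    intro x hx t ht hxt
    have e1 : edist (f x) (f t) ≤ eVariationOn f (Ico (0:ℝ) 1 ∩ Icc x t) :=
      eVariationOn.edist_le f ⟨hx, le_rfl, hxt⟩ ⟨ht, hxt, le_rfl⟩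
    have e2 : eVariationOn f (Ico (0:ℝ) 1 ∩ Icc 0 x) + eVariationOn f (Ico (0:ℝ) 1 ∩ Icc x t)
        ≤ eVariationOn f (Ico (0:ℝ) 1 ∩ Icc 0 t) := by
      refine le_trans (eVariationOn.add_le_union f ?_) (eVariationOn.mono f ?_)
      · rintro u ⟨-, -, hu2⟩ w ⟨-, hw1, -⟩; exact hu2.trans hw1
      · rintro u (⟨hu1, hu2, hu3⟩ | ⟨hu1, hu2, hu3⟩)
        · exact ⟨hu1, hu2, hu3.trans hxt⟩
        · exact ⟨hu1, hx.1.trans hu2, hu3⟩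
    have hmono := ENNReal.toReal_mono (hfin t) (le_trans (add_le_add le_rfl e1) e2)
    rw [ENNReal.toReal_add (hfin x) (edist_ne_top _ _)] at hmono
    have hed : (edist (f x) (f t)).toReal = |f t - f x| := by
      rw [edist_dist, ENNReal.toReal_ofReal dist_nonneg, Real.dist_eq, abs_sub_comm]
    rw [hed] at hmono
    linarith
  have hIj : ∀ j : ℕ, j < n → Ico ((j:ℝ)*h) (((j:ℝ)+1)*h) ⊆ Ico (0:ℝ) 1 := by
    intro j hj x hx
    refine ⟨le_trans (by positivity) hx.1, ?_⟩
    have h1 : ((j:ℝ)+1) * h ≤ (n:ℝ) * h := by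
      apply mul_le_mul_of_nonneg_right ?_ hh0.le
      exact_mod_cast Nat.succ_le_of_lt hj
    calc x < ((j:ℝ)+1)*h := hx.2
      _ ≤ (n:ℝ)*h := h1
      _ = 1 := hnh
  have hUnion : (⋃ j ∈ Finset.range n, Ico ((j:ℝ)*h) (((j:ℝ)+1)*h)) = Ico (0:ℝ) 1 := by
    have hgen : ∀ m : ℕ, (⋃ j ∈ Finset.range m, Ico ((j:ℝ)*h) (((j:ℝ)+1)*h))
        = Ico (0:ℝ) ((m:ℝ)*h) := by
      intro m
      induction m with
      | zero => simp
      | succ k ih =>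
        rw [Finset.range_add_one, Finset.set_biUnion_insert, ih, Set.union_comm,
          Ico_union_Ico_eq_Ico (by positivity) (by nlinarith [hh0.le])]
        push_cast
        ring_nf
    rw [hgen n, hnh]
  have hIPj : ∀ j ∈ Finset.range n,
      IntegrableOn (fun x => |P x - f x|) (Ico ((j:ℝ)*h) (((j:ℝ)+1)*h)) := by
    intro j hj
    have hj' := Finset.mem_range.1 hj
    have hfij : IntegrableOn f (Ico ((j:ℝ)*h) (((j:ℝ)+1)*h)) := hfInt.mono_set (hIj j hj')
    have hceq : EqOn (fun x => |((1/h) * ∫ t in Ico ((j:ℝ)*h) (((j:ℝ)+1)*h), f t) - f x|)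
        (fun x => |P x - f x|) (Ico ((j:ℝ)*h) (((j:ℝ)+1)*h)) := fun x hx => by
      show |((1/h) * ∫ t in Ico ((j:ℝ)*h) (((j:ℝ)+1)*h), f t) - f x| = |P x - f x|
      rw [hP j hj' x hx]
    exact IntegrableOn.congr_fun
      (((integrableOn_const (by simp [Real.volume_Ico])).sub hfij).abs)
      hceq measurableSet_Ico
  set g : ℕ → ℝ := fun k => if k < n then V ((k:ℝ) * h) else Vtot with hgdef
  have hdisj : Set.Pairwise ↑(Finset.range n)
      (Function.onFun Disjoint fun j : ℕ => Ico ((j:ℝ)*h) (((j:ℝ)+1)*h)) := by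
    intro i _ j _ hij
    simp only [Function.onFun]
    have habs : ∀ i j : ℕ, i < j →
        Disjoint (Ico ((i:ℝ)*h) (((i:ℝ)+1)*h)) (Ico ((j:ℝ)*h) (((j:ℝ)+1)*h)) := by
      intro i j hlt
      apply Set.Ico_disjoint_Ico.2
      calc min (((i:ℝ)+1)*h) (((j:ℝ)+1)*h) ≤ ((i:ℝ)+1)*h := min_le_left _ _
        _ ≤ (j:ℝ)*h := by
            apply mul_le_mul_of_nonneg_right ?_ hh0.le
            exact_mod_cast Nat.succ_le_of_lt hlt
        _ ≤ max ((i:ℝ)*h) ((j:ℝ)*h) := le_max_right _ _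
    rcases lt_or_gt_of_ne hij with hlt | hlt
    · exact habs i j hlt
    · exact (habs j i hlt).symm
  rw [← hUnion, integral_biUnion_finset (Finset.range n) (fun j _ => measurableSet_Ico)
    hdisj hIPj]
  have hbound : ∀ j ∈ Finset.range n,
      (∫ x in Ico ((j:ℝ)*h) (((j:ℝ)+1)*h), |P x - f x|) ≤ h / 2 * (g (j+1) - g j) := by
    intro j hj
    have hj' := Finset.mem_range.1 hj
    have hab : (j:ℝ)*h < ((j:ℝ)+1)*h := by nlinarith [hh0]
    have hsub := hIj j hj'
    have hL : ∀ x ∈ Ico ((j:ℝ)*h) (((j:ℝ)+1)*h), g j ≤ V x := by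
      intro x hx
      rw [hgdef]
      simp only [if_pos hj']
      exact hVmono hx.1
    have hG : ∀ x ∈ Ico ((j:ℝ)*h) (((j:ℝ)+1)*h), V x ≤ g (j+1) := by
      intro x hx
      rw [hgdef]
      by_cases hjn : j + 1 < n
      · simp only [if_pos hjn]
        have : x ≤ ((j+1:ℕ):ℝ) * h := by push_cast; exact hx.2.le
        exact hVmono this
      · simp only [if_neg hjn]
        exact hVle x
    have hfv : ∀ x ∈ Ico ((j:ℝ)*h) (((j:ℝ)+1)*h), ∀ t ∈ Ico ((j:ℝ)*h) (((j:ℝ)+1)*h),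
        |f t - f x| ≤ |V t - V x| := by
      intro x hx t ht
      rcases le_total x t with hxt | htx
      · calc |f t - f x| ≤ V t - V x := key x (hsub hx) t (hsub ht) hxt
          _ ≤ |V t - V x| := le_abs_self _
      · calc |f t - f x| = |f x - f t| := abs_sub_comm _ _
          _ ≤ V x - V t := key t (hsub ht) x (hsub hx) htx
          _ ≤ |V x - V t| := le_abs_self _
          _ = |V t - V x| := abs_sub_comm _ _
    have hPx : ∀ x ∈ Ico ((j:ℝ)*h) (((j:ℝ)+1)*h),
        P x = (((j:ℝ)+1)*h - (j:ℝ)*h)⁻¹ * ∫ t in Ico ((j:ℝ)*h) (((j:ℝ)+1)*h), f t := by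
      intro x hx
      rw [hP j hj' x hx, show ((j:ℝ)+1)*h - (j:ℝ)*h = h from by ring, one_div]
    have hres := ulam_interval hab hVmono (hfInt.mono_set hsub) hL hG hfv hPx
    rw [show ((j:ℝ)+1)*h - (j:ℝ)*h = h from by ring] at hres
    exact hres
  calc (∑ j ∈ Finset.range n, ∫ x in Ico ((j:ℝ)*h) (((j:ℝ)+1)*h), |P x - f x|)
      ≤ ∑ j ∈ Finset.range n, h / 2 * (g (j+1) - g j) := Finset.sum_le_sum hbound
    _ = h / 2 * ∑ j ∈ Finset.range n, (g (j+1) - g j) := by rw [Finset.mul_sum]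
    _ = h / 2 * (g n - g 0) := by rw [Finset.sum_range_sub]
    _ ≤ h / 2 * Vtot := by
        have h1 : g n = Vtot := if_neg (lt_irrefl n)
        have h2 : g 0 = V 0 := by
          rw [hgdef]
          simp only [Nat.cast_zero, zero_mul, if_pos (lt_of_lt_of_le Nat.one_pos hn)]
        rw [h1, h2]
        nlinarith [hV0 0, hh0.le]
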